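/- Let a < b < n be positive integers, t1, t2, t3 real, and suppose x, k1, k2 satisfy a·x − (t1+k1) = −(b·x − (t2+k2)) with λ_x := |a·x − (t1+k1)| ≤ (b−a)/(2n). Then μ_{a,b,n}(t1,t2,t3) ≤ (3b−a)/(2n). -/

import Mathlib

/-- Distance from a real number to the nearest integer. -/
noncomputable def dni (u : ℝ) : ℝ := |u - round u|

/-- Approximation cost of `(t1, t2)` relative to the two-element set `{a, b}`. -/
noncomputable def mu2 (a b : ℕ) (t1 t2 : ℝ) : ℝ :=
  ⨅ x : ℝ, max (dni (t1 - x * a)) (dni (t2 - x * b))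

/-- Approximation cost of `(t1, t2, t3)` relative to the set `{a, b, n}`. -/
noncomputable def mu3 (a b n : ℕ) (t1 t2 t3 : ℝ) : ℝ :=
  ⨅ x : ℝ, max (dni (t1 - x * a)) (max (dni (t2 - x * b)) (dni (t3 - x * n)))

/-- Angular Kronecker constant of `{a, b, n}`. -/
noncomputable def alpha3 (a b n : ℕ) : ℝ :=
  sSup {v : ℝ | ∃ t1 t2 t3 : ℝ, v = mu3 a b n t1 t2 t3}

/-- Binary Kronecker constant of `{a, b, n}`. -/
noncomputable def beta3 (a b n : ℕ) : ℝ :=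
  sSup {v : ℝ | ∃ t1 t2 t3 : ℝ, t1 ∈ ({0, 1/2} : Set ℝ) ∧ t2 ∈ ({0, 1/2} : Set ℝ) ∧
    t3 ∈ ({0, 1/2} : Set ℝ) ∧ v = mu3 a b n t1 t2 t3}

lemma dni_le_int (u : ℝ) (m : ℤ) : dni u ≤ |u - m| := round_le u m

lemma dni_nonneg (u : ℝ) : 0 ≤ dni u := abs_nonneg _

theorem stmt_4 (a b n : ℕ) (ha : 0 < a) (hab : a < b) (hbn : b < n)
    (t1 t2 t3 : ℝ) (x : ℝ) (k1 k2 : ℤ)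
    (hbal : a * x - (t1 + k1) = -(b * x - (t2 + k2)))
    (hsmall : |a * x - (t1 + k1)| ≤ ((b : ℝ) - a) / (2 * n)) :
    mu3 a b n t1 t2 t3 ≤ (3 * (b : ℝ) - a) / (2 * n) := by
  have hn0 : (0:ℝ) < n := by exact_mod_cast ha.trans (hab.trans hbn)
  have ha0 : (0:ℝ) < a := by exact_mod_cast ha
  have hb0 : (0:ℝ) < b := ha0.trans (by exact_mod_cast hab)
  have hbR : (a:ℝ) < b := by exact_mod_cast hab
  have hnR : (b:ℝ) < n := by exact_mod_cast hbn
  set m : ℤ := round (t3 - x * n) with hm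
  set x' : ℝ := (t3 - m) / n with hx'
  have hd : |x' - x| ≤ 1 / (2 * n) := by
    have h1 : |t3 - x * n - m| ≤ 1 / 2 := abs_sub_round _
    have hx'x : x' - x = (t3 - x * n - m) / n := by
      rw [eq_div_iff hn0.ne', hx', sub_mul, div_mul_cancel₀ _ hn0.ne']
      ring
    rw [hx'x, abs_div, abs_of_pos hn0]
    rw [div_le_div_iff₀ hn0 (by positivity)]
    calc |t3 - x * n - m| * (2 * n) ≤ (1/2) * (2 * n) := by
          apply mul_le_mul_of_nonneg_right h1 (by positivity)
      _ = 1 * n := by ring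
  have key3 : dni (t3 - x' * n) = 0 := by
    have : t3 - x' * n = (m : ℝ) := by rw [hx', div_mul_cancel₀ _ hn0.ne']; ring
    rw [this]
    simp [dni, round_intCast]
  have key1 : dni (t1 - x' * a) ≤ ((b:ℝ)) / (2 * n) := by
    calc dni (t1 - x' * a) ≤ |t1 - x' * a - ((-k1 : ℤ) : ℝ)| := dni_le_int _ _
      _ = |(a * x - (t1 + k1)) + a * (x' - x)| := by
          rw [← abs_neg]; push_cast; ring_nf
      _ ≤ |a * x - (t1 + k1)| + |(a:ℝ)| * |x' - x| := by
          rw [← abs_mul]; exact abs_add_le _ _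
      _ ≤ ((b : ℝ) - a) / (2 * n) + a * (1 / (2 * n)) := by
          apply add_le_add hsmall
          rw [abs_of_pos ha0]
          exact mul_le_mul_of_nonneg_left hd ha0.le
      _ = (b:ℝ) / (2 * n) := by field_simp; ring
  have key2 : dni (t2 - x' * b) ≤ (2 * (b:ℝ) - a) / (2 * n) := by
    have h2 : |b * x - (t2 + k2)| ≤ ((b : ℝ) - a) / (2 * n) := by
      rw [← abs_neg, ← hbal]; exact hsmall
    calc dni (t2 - x' * b) ≤ |t2 - x' * b - ((-k2 : ℤ) : ℝ)| := dni_le_int _ _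
      _ = |(b * x - (t2 + k2)) + b * (x' - x)| := by
          rw [← abs_neg]; push_cast; ring_nf
      _ ≤ |b * x - (t2 + k2)| + |(b:ℝ)| * |x' - x| := by
          rw [← abs_mul]; exact abs_add_le _ _
      _ ≤ ((b : ℝ) - a) / (2 * n) + b * (1 / (2 * n)) := by
          apply add_le_add h2
          rw [abs_of_pos hb0]
          exact mul_le_mul_of_nonneg_left hd hb0.le
      _ = (2 * (b:ℝ) - a) / (2 * n) := by field_simp; ring
  have hbdd : BddBelow (Set.range fun x : ℝ =>
      max (dni (t1 - x * a)) (max (dni (t2 - x * b)) (dni (t3 - x * n)))) := by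
    refine ⟨0, ?_⟩
    rintro v ⟨y, rfl⟩
    exact le_trans (dni_nonneg _) (le_max_left _ _)
  refine le_trans (ciInf_le hbdd x') ?_
  have h1 : (b:ℝ) / (2 * n) ≤ (3 * (b : ℝ) - a) / (2 * n) := by
    gcongr; linarith
  have h2 : (2 * (b:ℝ) - a) / (2 * n) ≤ (3 * (b : ℝ) - a) / (2 * n) := by
    gcongr; linarith
  exact max_le (key1.trans h1) (max_le (key2.trans h2)
    (by rw [key3]; exact div_nonneg (by linarith) (by positivity)))
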